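/- The function t ↦ (t + 5t⁻³ − 6t⁻⁵)/(√(t² − 1)·(t^(−2/3) + 6t⁻⁴ + t⁻²)) is strictly increasing on (1, ∞). -/

import Mathlib

open Real

lemma auxB : StrictMonoOn (fun s : ℝ => (s^12+s^6+6)/(s^10+s^6+6)) (Set.Ioi 1) := by
  have hcont : ContinuousOn (fun s : ℝ => (s^12+s^6+6)/(s^10+s^6+6)) (Set.Ioi 1) := by
    apply ContinuousOn.div (by fun_prop) (by fun_prop)
    intro s hs
    have h1 : (1:ℝ) < s := hs
    positivity
  apply strictMonoOn_of_deriv_pos (convex_Ioi 1) hcont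
  intro s hs
  rw [interior_Ioi] at hs
  have h1 : (1:ℝ) < s := hs
  have hs0 : (0:ℝ) < s := lt_trans one_pos h1
  have hden : s^10+s^6+6 ≠ 0 := by positivity
  have hnum : HasDerivAt (fun s : ℝ => s^12+s^6+6) (12*s^11+6*s^5) s := by
    have h := ((hasDerivAt_pow 12 s).add (hasDerivAt_pow 6 s)).add_const (6:ℝ)
    exact h.congr_deriv (by norm_num)
  have hden' : HasDerivAt (fun s : ℝ => s^10+s^6+6) (10*s^9+6*s^5) s := by
    have h := ((hasDerivAt_pow 10 s).add (hasDerivAt_pow 6 s)).add_const (6:ℝ)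
    exact h.congr_deriv (by norm_num)
  have hd := hnum.div hden' hden
  rw [(hnum.fun_div hden' hden).deriv]
  apply div_pos
  · nlinarith [pow_le_pow_right₀ h1.le (by norm_num : 15 ≤ 17),
      pow_le_pow_right₀ h1.le (by norm_num : 9 ≤ 11),
      pow_pos hs0 9, pow_pos hs0 21, pow_pos hs0 15]
  · positivity

lemma auxA {x y : ℝ} (hx : 1 < x) (hxy : x < y) :
    Real.sqrt (x^2-1)/x < Real.sqrt (y^2-1)/y := by
  have hx0 : (0:ℝ) < x := lt_trans one_pos hx
  have hy0 : (0:ℝ) < y := lt_trans hx0 hxy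
  rw [div_lt_div_iff₀ hx0 hy0]
  have h1 : Real.sqrt (x^2-1) * y = Real.sqrt ((x^2-1)*y^2) := by
    rw [Real.sqrt_mul (by nlinarith), Real.sqrt_sq hy0.le]
  have h2 : Real.sqrt (y^2-1) * x = Real.sqrt ((y^2-1)*x^2) := by
    rw [Real.sqrt_mul (by nlinarith), Real.sqrt_sq hx0.le]
  rw [h1, h2]
  apply Real.sqrt_lt_sqrt (mul_nonneg (by nlinarith) (sq_nonneg y))
  nlinarith

lemma f_eq (t : ℝ) (ht : 1 < t) :
    (t + 5 * (t ^ 3)⁻¹ - 6 * (t ^ 5)⁻¹) /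
      (Real.sqrt (t ^ 2 - 1) * (t ^ (-(2 : ℝ) / 3) + 6 * (t ^ 4)⁻¹ + (t ^ 2)⁻¹))
    = (Real.sqrt (t^2-1) / t) *
      (((t ^ ((1:ℝ)/3))^12 + (t ^ ((1:ℝ)/3))^6 + 6)/((t ^ ((1:ℝ)/3))^10 + (t ^ ((1:ℝ)/3))^6 + 6)) := by
  have ht0 : (0:ℝ) < t := lt_trans one_pos ht
  set s := t ^ ((1:ℝ)/3) with hsdef
  have hs0 : 0 < s := Real.rpow_pos_of_pos ht0 _
  have hs1 : 1 < s := Real.one_lt_rpow_iff_of_pos ht0 |>.mpr (Or.inl ⟨ht, by norm_num⟩)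
  have hts : t = s^3 := by
    rw [hsdef, ← Real.rpow_natCast (t ^ ((1:ℝ)/3)) 3, ← Real.rpow_mul ht0.le]
    norm_num
  have hrp : t ^ (-(2:ℝ)/3) = (s^2)⁻¹ := by
    rw [show -(2:ℝ)/3 = (1/3)*(-2) by ring, Real.rpow_mul ht0.le, ← hsdef,
      Real.rpow_neg hs0.le, Real.rpow_two]
  set w := Real.sqrt (t^2-1) with hwdef
  have hw0 : 0 < w := Real.sqrt_pos.mpr (by nlinarith)
  have hw2 : w^2 = s^6 - 1 := by
    rw [hwdef, Real.sq_sqrt (by nlinarith), hts]; ring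
  rw [hrp, hts]
  have hNum : s^3 + 5*((s^3)^3)⁻¹ - 6*((s^3)^5)⁻¹ = w^2 * ((s^12+s^6+6)/s^15) := by
    rw [hw2]
    field_simp
    ring
  rw [hNum, show w^2 * ((s^12+s^6+6)/s^15)
      = w * (w * ((s^12+s^6+6)/s^15)) by ring,
    mul_div_mul_left _ _ hw0.ne']
  have hQ : (s^2)⁻¹ + 6*((s^3)^4)⁻¹ + ((s^3)^2)⁻¹ ≠ 0 := by positivity
  have hden1 : (s^10+s^6+6 : ℝ) ≠ 0 := by positivity
  field_simp
  ring

theorem stmt_12 :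
    StrictMonoOn
      (fun t : ℝ => (t + 5 * (t ^ 3)⁻¹ - 6 * (t ^ 5)⁻¹) /
        (Real.sqrt (t ^ 2 - 1) * (t ^ (-(2 : ℝ) / 3) + 6 * (t ^ 4)⁻¹ + (t ^ 2)⁻¹)))
      (Set.Ioi (1 : ℝ)) := by
  intro x hx y hy hxy
  simp only [Set.mem_Ioi] at hx hy
  have hx0 : (0:ℝ) < x := lt_trans one_pos hx
  have hy0 : (0:ℝ) < y := lt_trans one_pos hy
  simp only
  rw [f_eq x hx, f_eq y hy]
  set sx := x ^ ((1:ℝ)/3) with hsx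
  set sy := y ^ ((1:ℝ)/3) with hsy
  have hsx1 : 1 < sx := Real.one_lt_rpow_iff_of_pos hx0 |>.mpr (Or.inl ⟨hx, by norm_num⟩)
  have hsy1 : 1 < sy := Real.one_lt_rpow_iff_of_pos hy0 |>.mpr (Or.inl ⟨hy, by norm_num⟩)
  have hsxy : sx < sy := Real.rpow_lt_rpow hx0.le hxy (by norm_num)
  have hB := auxB (Set.mem_Ioi.mpr hsx1) (Set.mem_Ioi.mpr hsy1) hsxy
  simp only at hB
  have hgx : 0 < (sx^12+sx^6+6)/(sx^10+sx^6+6) := by positivity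
  have hAy : 0 < Real.sqrt (y^2-1)/y :=
    div_pos (Real.sqrt_pos.mpr (by nlinarith)) hy0
  calc Real.sqrt (x^2-1)/x * ((sx^12+sx^6+6)/(sx^10+sx^6+6))
      < Real.sqrt (y^2-1)/y * ((sx^12+sx^6+6)/(sx^10+sx^6+6)) :=
        mul_lt_mul_of_pos_right (auxA hx hxy) hgx
    _ < Real.sqrt (y^2-1)/y * ((sy^12+sy^6+6)/(sy^10+sy^6+6)) :=
        mul_lt_mul_of_pos_left hB hAy
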